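/- Let σ = σ_1σ_2⋯σ_k-σ_{k+1} and τ = τ_1τ_2⋯τ_k-τ_{k+1} be quasi-consecutive vincular patterns whose consecutive parts are order-isomorphic, i.e. σ_1⋯σ_k ∼ τ_1⋯τ_k. Fix n and 1 ≤ i ≤ k, and suppose that T_n(σ)[x, i, w] = T_n(τ)[x, i, w] for all 0 ≤ x < n−k and all words w ∈ [n]^{x+k−1}. Then for every 0 ≤ r < i and every word v ∈ [n]^r, T_n(σ)[v] = T_n(τ)[v]. In particular (taking v to be the empty word), |S_n(σ)| = |S_n(τ)|. -/

import Mathlib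

/-- The set of permutation words of length `n`: injective functions
`Fin n → ℕ` whose range is `{1, …, n}` (the word `π_1 π_2 ⋯ π_n`). -/
def PermWords (n : ℕ) : Set (Fin n → ℕ) :=
  {π | Function.Injective π ∧ Set.range π = Set.Icc 1 n}

/-- A word `σ : Fin k → ℕ` is a permutation word, i.e. an element of `S_k`. -/
def IsPermWord {k : ℕ} (σ : Fin k → ℕ) : Prop :=
  Function.Injective σ ∧ Set.range σ = Set.Icc 1 k

/-- `π` contains the vincular pattern `(σ, T)`.  Here `T ⊆ {1, …, k-1}` is the set of
(1-based) adjacency indices: `j ∈ T` forces the `j`-th and `(j+1)`-st letters of an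
occurrence to be at adjacent positions.  (Positions are 0-based `Fin` indices, so the
1-based adjacency index `j+1 ∈ T` relates 0-based positions `j` and `j+1`.) -/
def Contains {n k : ℕ} (π : Fin n → ℕ) (σ : Fin k → ℕ) (T : Set ℕ) : Prop :=
  ∃ idx : Fin k → Fin n, StrictMono idx ∧
    (∀ s t : Fin k, π (idx s) < π (idx t) ↔ σ s < σ t) ∧
    (∀ j : ℕ, j + 1 ∈ T → ∀ h : j + 1 < k,
      ((idx ⟨j + 1, h⟩ : ℕ) = (idx ⟨j, Nat.lt_of_succ_lt h⟩ : ℕ) + 1))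

/-- The first `z` letters of `a` are order-isomorphic to the last `z` letters of `b`
(i.e. `a_1 ⋯ a_z ∼ b_{k-z+1} ⋯ b_k`). -/
def OrderIsoAt {k : ℕ} (a b : Fin k → ℕ) (z : ℕ) : Prop :=
  ∀ s t : Fin k, (s : ℕ) < z → (t : ℕ) < z →
    ∀ hs : k - z + (s : ℕ) < k, ∀ ht : k - z + (t : ℕ) < k,
      (a s < a t ↔ b ⟨k - z + (s : ℕ), hs⟩ < b ⟨k - z + (t : ℕ), ht⟩)

/-- A Young diagram: a finite, downward-closed set of cells with positive coordinates
(first coordinate = column, second coordinate = row). -/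
structure YoungShape where
  cells : Set (ℕ × ℕ)
  finite : cells.Finite
  pos : ∀ c ∈ cells, 1 ≤ c.1 ∧ 1 ≤ c.2
  lower : ∀ c ∈ cells, ∀ a b : ℕ, 1 ≤ a → a ≤ c.1 → 1 ≤ b → b ≤ c.2 → (a, b) ∈ cells

/-- A filling of a Young diagram: a set of selected cells with pairwise distinct
first coordinates and pairwise distinct second coordinates. -/
def IsFilling (D : YoungShape) (F : Set (ℕ × ℕ)) : Prop :=
  F ⊆ D.cells ∧
  (∀ c ∈ F, ∀ c' ∈ F, c.1 = c'.1 → c = c') ∧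
  (∀ c ∈ F, ∀ c' ∈ F, c.2 = c'.2 → c = c')

/-- A filling `F` of the Young diagram `D` contains the vincular pattern `(σ, T)`. -/
def FillingContains (D : YoungShape) (F : Set (ℕ × ℕ)) {k : ℕ}
    (σ : Fin k → ℕ) (T : Set ℕ) : Prop :=
  ∃ idx v : Fin k → ℕ, StrictMono idx ∧
    (∀ s : Fin k, (idx s, v s) ∈ F) ∧
    (∀ s t : Fin k, v s < v t ↔ σ s < σ t) ∧
    (∀ s t : Fin k, (idx s, v t) ∈ D.cells) ∧
    (∀ j : ℕ, j + 1 ∈ T → ∀ h : j + 1 < k,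
      idx ⟨j + 1, h⟩ = idx ⟨j, Nat.lt_of_succ_lt h⟩ + 1)

/-- The rows of `D` containing no selected cell of `F`. -/
def emptyRows (D : YoungShape) (F : Set (ℕ × ℕ)) : Set ℕ :=
  {r | (∃ c ∈ D.cells, c.2 = r) ∧ ∀ c ∈ F, c.2 ≠ r}

/-- The columns of `D` containing no selected cell of `F`. -/
def emptyCols (D : YoungShape) (F : Set (ℕ × ℕ)) : Set ℕ :=
  {r | (∃ c ∈ D.cells, c.1 = r) ∧ ∀ c ∈ F, c.1 ≠ r}

/-- Filling-shape-Wilf-equivalence of the vincular patterns `(σ, Tσ)` and `(τ, Tτ)`. -/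
def FSWilfEquiv {k : ℕ} (σ : Fin k → ℕ) (Tσ : Set ℕ) (τ : Fin k → ℕ) (Tτ : Set ℕ) : Prop :=
  ∀ (D : YoungShape) (R C : Set ℕ),
    {F : Set (ℕ × ℕ) | IsFilling D F ∧ ¬ FillingContains D F σ Tσ ∧
      emptyRows D F = R ∧ emptyCols D F = C}.ncard =
    {F : Set (ℕ × ℕ) | IsFilling D F ∧ ¬ FillingContains D F τ Tτ ∧
      emptyRows D F = R ∧ emptyCols D F = C}.ncard

/-- The consecutive pattern `σ'` (of length `k`) occurs in `π` at the 1-based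
positions `x+1, …, x+k`. -/
def OccursAt {n k : ℕ} (π : Fin n → ℕ) (σ' : Fin k → ℕ) (x : ℕ) : Prop :=
  ∃ h : x + k ≤ n, ∀ s t : Fin k,
    (π ⟨x + (s : ℕ), by have := s.isLt; omega⟩ < π ⟨x + (t : ℕ), by have := t.isLt; omega⟩
      ↔ σ' s < σ' t)

/-- `T_n(σ)[v]` for a quasi-consecutive pattern `σ = σ_1 ⋯ σ_k - σ_{k+1}`
(adjacency set `{1, …, k-1}`): the number of `σ`-avoiding permutations of length `n`
beginning with the word `v`. -/
noncomputable def Tnv (n : ℕ) {k : ℕ} (σ : Fin (k + 1) → ℕ) {r : ℕ} (v : Fin r → ℕ) : ℕ :=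
  {π : Fin n → ℕ | π ∈ PermWords n ∧ ¬ Contains π σ (Set.Icc 1 (k - 1)) ∧
    ∀ p : Fin r, ∀ h : (p : ℕ) < n, π ⟨(p : ℕ), h⟩ = v p}.ncard

/-- `T_n(σ)[x, i, w]` for a quasi-consecutive pattern `σ = σ_1 ⋯ σ_k - σ_{k+1}`:
the number of `σ`-avoiding permutations of length `n` whose earliest occurrence of
the consecutive pattern `σ_1 ⋯ σ_k` is at 1-based positions `x+1, …, x+k` and such
that `w = π_1 ⋯ π_{x+i-1} π_{x+i+1} ⋯ π_{x+k}`. -/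
noncomputable def TnXIW (n : ℕ) {k : ℕ} (σ : Fin (k + 1) → ℕ) (x i : ℕ) (w : Fin (x + k - 1) → ℕ) : ℕ :=
  {π : Fin n → ℕ | π ∈ PermWords n ∧ ¬ Contains π σ (Set.Icc 1 (k - 1)) ∧
    OccursAt π (fun t : Fin k => σ t.castSucc) x ∧
    (∀ x' < x, ¬ OccursAt π (fun t : Fin k => σ t.castSucc) x') ∧
    (∀ p : Fin (x + k - 1), ∀ h1 : (p : ℕ) < n, ∀ h2 : (p : ℕ) + 1 < n,
      w p = if (p : ℕ) + 1 ≤ x + i - 1 then π ⟨(p : ℕ), h1⟩ else π ⟨(p : ℕ) + 1, h2⟩)}.ncard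

/-- `T_n(σ) = |S_n(σ)|` for a length-5 quasi-consecutive pattern word `σ`
(adjacency set `T = {1,2,3}`). -/
noncomputable def T0 (n : ℕ) (σ : Fin 5 → ℕ) : ℕ :=
  {π : Fin n → ℕ | π ∈ PermWords n ∧ ¬ Contains π σ ({1, 2, 3} : Set ℕ)}.ncard

/-- `T_n(σ)[k]`: the number of `σ`-avoiding permutations of length `n` with `π_1 = a`. -/
noncomputable def T1 (n : ℕ) (σ : Fin 5 → ℕ) (a : ℕ) : ℕ :=
  {π : Fin n → ℕ | π ∈ PermWords n ∧ ¬ Contains π σ ({1, 2, 3} : Set ℕ) ∧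
    ∀ h : 0 < n, π ⟨0, h⟩ = a}.ncard

/-- `T_n(σ)[k, ℓ]`: the number of `σ`-avoiding permutations of length `n` with
`π_1 = a` and `π_2 = b`. -/
noncomputable def T2 (n : ℕ) (σ : Fin 5 → ℕ) (a b : ℕ) : ℕ :=
  {π : Fin n → ℕ | π ∈ PermWords n ∧ ¬ Contains π σ ({1, 2, 3} : Set ℕ) ∧
    (∀ h : 0 < n, π ⟨0, h⟩ = a) ∧ (∀ h : 1 < n, π ⟨1, h⟩ = b)}.ncard

lemma permWords_finite (n : ℕ) : (PermWords n).Finite := by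
  have hsub : PermWords n ⊆ Set.pi Set.univ (fun _ : Fin n => Set.Icc 1 n) := by
    intro π hπ j _
    have : π j ∈ Set.range π := Set.mem_range_self j
    rwa [hπ.2] at this
  exact (Set.Finite.pi (fun _ => Set.finite_Icc 1 n)).subset hsub

lemma exists_bijOn_of_ncard_eq' {α : Type*} [Nonempty α] {s t : Set α}
    (hs : s.Finite) (ht : t.Finite) (h : s.ncard = t.ncard) :
    ∃ f : α → α, Set.BijOn f s t := by
  apply hs.exists_bijOn_of_encard_eq
  rw [hs.encard_eq_coe_toFinset_card, ht.encard_eq_coe_toFinset_card,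
    ← Set.ncard_eq_toFinset_card _ hs, ← Set.ncard_eq_toFinset_card _ ht, h]

lemma occursAt_congr {n k : ℕ} (π : Fin n → ℕ) (a b : Fin k → ℕ)
    (hiso : ∀ s t, a s < a t ↔ b s < b t) (x : ℕ) :
    OccursAt π a x ↔ OccursAt π b x := by
  constructor
  · rintro ⟨h, hi⟩
    exact ⟨h, fun s t => by rw [← hiso s t]; exact hi s t⟩
  · rintro ⟨h, hi⟩
    exact ⟨h, fun s t => by rw [hiso s t]; exact hi s t⟩

lemma occursAt_of_contains {n k : ℕ} (hk : 1 ≤ k) (π : Fin n → ℕ) (σ : Fin (k+1) → ℕ)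
    (h : Contains π σ (Set.Icc 1 (k - 1))) :
    ∃ x, x + k < n ∧ OccursAt π (fun t : Fin k => σ t.castSucc) x := by
  obtain ⟨idx, hmono, hiso, hadj⟩ := h
  have hval : ∀ j : ℕ, ∀ hj : j < k, (idx ⟨j, by omega⟩ : ℕ) = (idx ⟨0, by omega⟩ : ℕ) + j := by
    intro j
    induction j with
    | zero => intro _; rfl
    | succ m ih =>
      intro hj
      have h1 : m < k := by omega
      have hstep := hadj m ⟨by omega, by omega⟩ (by omega)
      rw [hstep, ih h1]
      omega
  have hkk : (0:ℕ) < k + 1 := by omega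
  set x : ℕ := (idx ⟨0, hkk⟩ : ℕ) with hx
  have hk1 : (idx ⟨k - 1, by omega⟩ : ℕ) = x + (k - 1) := hval (k - 1) (by omega)
  have hlt : idx ⟨k - 1, by omega⟩ < idx ⟨k, by omega⟩ := by
    apply hmono
    exact Fin.mk_lt_mk.2 (by omega)
  have hn : (idx ⟨k, by omega⟩ : ℕ) < n := (idx ⟨k, by omega⟩).isLt
  have hxn : x + k < n := by
    have := Fin.lt_iff_val_lt_val.1 hlt
    omega
  refine ⟨x, hxn, by omega, ?_⟩
  intro s t
  have e := hiso s.castSucc t.castSucc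
  convert e using 2
  · refine congrArg π (Fin.ext ?_)
    have := hval (s : ℕ) s.isLt
    simp only [Fin.castSucc, Fin.castAdd, Fin.castLE] at this ⊢
    omega
  · refine congrArg π (Fin.ext ?_)
    have := hval (t : ℕ) t.isLt
    simp only [Fin.castSucc, Fin.castAdd, Fin.castLE] at this ⊢
    omega

def XSet (n : ℕ) {k : ℕ} (σ : Fin (k + 1) → ℕ) (x i : ℕ) (w : Fin (x + k - 1) → ℕ) :
    Set (Fin n → ℕ) :=
  {π | π ∈ PermWords n ∧ ¬ Contains π σ (Set.Icc 1 (k - 1)) ∧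
    OccursAt π (fun t : Fin k => σ t.castSucc) x ∧
    (∀ x' < x, ¬ OccursAt π (fun t : Fin k => σ t.castSucc) x') ∧
    (∀ p : Fin (x + k - 1), ∀ h1 : (p : ℕ) < n, ∀ h2 : (p : ℕ) + 1 < n,
      w p = if (p : ℕ) + 1 ≤ x + i - 1 then π ⟨(p : ℕ), h1⟩ else π ⟨(p : ℕ) + 1, h2⟩)}

def wwordT (n : ℕ) (π : Fin n → ℕ) (x k i : ℕ) : ℕ → ℕ :=
  fun p => if p < x + k - 1 then
    (if h1 : p < n then
      (if p + 1 ≤ x + i - 1 then π ⟨p, h1⟩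
       else if h2 : p + 1 < n then π ⟨p + 1, h2⟩ else 0)
     else 0)
  else 0


lemma TnXIW_eq_XSet (n : ℕ) {k : ℕ} (σ : Fin (k + 1) → ℕ) (x i : ℕ)
    (w : Fin (x + k - 1) → ℕ) : TnXIW n σ x i w = (XSet n σ x i w).ncard := rfl

def VSet (n : ℕ) {k : ℕ} (σ : Fin (k + 1) → ℕ) {r : ℕ} (v : Fin r → ℕ) :
    Set (Fin n → ℕ) :=
  {π | π ∈ PermWords n ∧ ¬ Contains π σ (Set.Icc 1 (k - 1)) ∧
    ∀ p : Fin r, ∀ h : (p : ℕ) < n, π ⟨(p : ℕ), h⟩ = v p}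

lemma Tnv_eq_VSet (n : ℕ) {k : ℕ} (σ : Fin (k + 1) → ℕ) {r : ℕ} (v : Fin r → ℕ) :
    Tnv n σ v = (VSet n σ v).ncard := rfl

/-- Lemma (partition lemma): if the consecutive parts of the quasi-consecutive
patterns `σ = σ_1⋯σ_k-σ_{k+1}` and `τ = τ_1⋯τ_k-τ_{k+1}` are order-isomorphic, and
`T_n(σ)[x, i, w] = T_n(τ)[x, i, w]` for all `0 ≤ x < n-k` and all `w ∈ [n]^{x+k-1}`,
then `T_n(σ)[v] = T_n(τ)[v]` for all `0 ≤ r < i` and `v ∈ [n]^r`; in particular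
`|S_n(σ)| = |S_n(τ)|`. -/
theorem stmt7 (k n : ℕ) (hk : 1 ≤ k) (σ τ : Fin (k + 1) → ℕ)
    (hσ : IsPermWord σ) (hτ : IsPermWord τ)
    (hiso : ∀ s t : Fin k, σ s.castSucc < σ t.castSucc ↔ τ s.castSucc < τ t.castSucc)
    (i : ℕ) (hi1 : 1 ≤ i) (hik : i ≤ k)
    (hyp : ∀ x : ℕ, x < n - k → ∀ w : Fin (x + k - 1) → ℕ,
      (∀ p, w p ∈ Set.Icc 1 n) → TnXIW n σ x i w = TnXIW n τ x i w) :
    (∀ r : ℕ, r < i → ∀ v : Fin r → ℕ, (∀ p, v p ∈ Set.Icc 1 n) →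
      Tnv n σ v = Tnv n τ v) ∧
    {π : Fin n → ℕ | π ∈ PermWords n ∧ ¬ Contains π σ (Set.Icc 1 (k - 1))}.ncard =
      {π : Fin n → ℕ | π ∈ PermWords n ∧ ¬ Contains π τ (Set.Icc 1 (k - 1))}.ncard := by
  classical
  have hfin := permWords_finite n
  have hoc : ∀ (π : Fin n → ℕ) (x : ℕ),
      OccursAt π (fun t : Fin k => σ t.castSucc) x ↔
      OccursAt π (fun t : Fin k => τ t.castSucc) x :=
    fun π x => occursAt_congr π _ _ hiso x
  have hnocc : ∀ (ρ : Fin (k + 1) → ℕ) (π : Fin n → ℕ),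
      (∀ x, ¬ OccursAt π (fun t : Fin k => ρ t.castSucc) x) →
      ¬ Contains π ρ (Set.Icc 1 (k - 1)) := by
    intro ρ π hno hc
    obtain ⟨x, _, hx⟩ := occursAt_of_contains hk π ρ hc
    exact hno x hx
  have hXfin : ∀ (ρ : Fin (k + 1) → ℕ) (x : ℕ) (w : Fin (x + k - 1) → ℕ),
      (XSet n ρ x i w).Finite :=
    fun ρ x w => hfin.subset (fun π hπ => hπ.1)
  have hsub : ∀ (a b : Fin (k + 1) → ℕ),
      (∀ s t : Fin k, a s.castSucc < a t.castSucc ↔ b s.castSucc < b t.castSucc) →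
      ∀ x, n - k ≤ x → ∀ w : Fin (x + k - 1) → ℕ, XSet n a x i w ⊆ XSet n b x i w := by
    intro a b hab x hx w π hπ
    obtain ⟨hP, hC, hO, hmin, hwc⟩ := hπ
    refine ⟨hP, ?_, (occursAt_congr π _ _ hab x).1 hO,
      fun x' hx' hc => hmin x' hx' ((occursAt_congr π _ _ hab x').2 hc), hwc⟩
    intro hc
    obtain ⟨x', hx'n, hx'o⟩ := occursAt_of_contains hk π b hc
    exact hmin x' (by omega) ((occursAt_congr π _ _ hab x').2 hx'o)
  have hempty : ∀ (ρ : Fin (k + 1) → ℕ) (x : ℕ) (w : Fin (x + k - 1) → ℕ)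
      (p : Fin (x + k - 1)), w p ∉ Set.Icc 1 n → XSet n ρ x i w = ∅ := by
    intro ρ x w p hp
    ext π
    simp only [Set.mem_empty_iff_false, iff_false]
    intro hπ
    obtain ⟨hP, -, hO, -, hwc⟩ := hπ
    obtain ⟨hxk, -⟩ := hO
    have hplt := p.isLt
    have h1 : (p : ℕ) < n := by omega
    have h2 : (p : ℕ) + 1 < n := by omega
    have := hwc p h1 h2
    apply hp
    rw [this]
    split_ifs
    · rw [← hP.2]; exact Set.mem_range_self _
    · rw [← hP.2]; exact Set.mem_range_self _
  have key : ∀ (x : ℕ) (u : ℕ → ℕ), ∃ g : (Fin n → ℕ) → (Fin n → ℕ),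
      Set.BijOn g (XSet n σ x i (fun p => u ↑p)) (XSet n τ x i (fun p => u ↑p)) := by
    intro x u
    by_cases hx : x < n - k
    · by_cases hw : ∀ p : Fin (x + k - 1), u ↑p ∈ Set.Icc 1 n
      · apply exists_bijOn_of_ncard_eq' (hXfin _ _ _) (hXfin _ _ _)
        have := hyp x hx (fun p => u ↑p) hw
        rwa [TnXIW_eq_XSet, TnXIW_eq_XSet] at this
      · push_neg at hw
        obtain ⟨p, hp⟩ := hw
        refine ⟨id, ?_⟩
        rw [hempty σ x _ p hp, hempty τ x _ p hp]
        exact Set.bijOn_id ∅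
    · refine ⟨id, ?_⟩
      have h1 := hsub σ τ hiso x (by omega) (fun p => u ↑p)
      have h2 := hsub τ σ (fun s t => (hiso s t).symm) x (by omega) (fun p => u ↑p)
      have he : XSet n σ x i (fun p => u ↑p) = XSet n τ x i (fun p => u ↑p) :=
        Set.Subset.antisymm h1 h2
      rw [he]
      exact Set.bijOn_id _
  choose g hg using key
  have hwval : ∀ (π : Fin n → ℕ) (x p : ℕ) (hp : p < x + k - 1) (h1 : p < n)
      (h2 : p + 1 < n), wwordT n π x k i p =
        if p + 1 ≤ x + i - 1 then π ⟨p, h1⟩ else π ⟨p + 1, h2⟩ := by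
    intro π x p hp h1 h2
    simp only [wwordT]
    rw [if_pos hp, dif_pos h1]
    split_ifs <;> first | rfl | omega
  have hmemX : ∀ (ρ : Fin (k + 1) → ℕ) (π : Fin n → ℕ) (x : ℕ), π ∈ PermWords n →
      ¬ Contains π ρ (Set.Icc 1 (k - 1)) →
      OccursAt π (fun t : Fin k => ρ t.castSucc) x →
      (∀ x' < x, ¬ OccursAt π (fun t : Fin k => ρ t.castSucc) x') →
      π ∈ XSet n ρ x i (fun p => wwordT n π x k i ↑p) := by
    intro ρ π x hP hC hO hmin
    exact ⟨hP, hC, hO, hmin, fun p h1 h2 => hwval π x ↑p p.isLt h1 h2⟩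
  have main : ∀ r : ℕ, r < i → ∀ v : Fin r → ℕ,
      (VSet n σ v).ncard = (VSet n τ v).ncard := by
    intro r hr v
    have hletter : ∀ (ρ : Fin (k + 1) → ℕ) (x : ℕ) (w : Fin (x + k - 1) → ℕ)
        (π : Fin n → ℕ), π ∈ XSet n ρ x i w →
        ∀ (p : Fin r) (hpx : (p : ℕ) < x + k - 1) (h1 : (p : ℕ) < n),
          π ⟨(p : ℕ), h1⟩ = w ⟨(p : ℕ), hpx⟩ := by
      intro ρ x w π hπ p hpx h1
      obtain ⟨-, -, hO, -, hwc⟩ := hπ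
      obtain ⟨hxk, -⟩ := hO
      have h2 : (p : ℕ) + 1 < n := by omega
      have he := hwc ⟨(p : ℕ), hpx⟩ h1 h2
      have hplt := p.isLt
      have hcond : ((⟨(p : ℕ), hpx⟩ : Fin (x + k - 1)) : ℕ) + 1 ≤ x + i - 1 := by
        show (p : ℕ) + 1 ≤ x + i - 1
        omega
      rw [if_pos hcond] at he
      exact he.symm
    set F : (Fin n → ℕ) → (Fin n → ℕ) := fun π =>
      if h : ∃ x, OccursAt π (fun t : Fin k => σ t.castSucc) x then
        g (Nat.find h) (wwordT n π (Nat.find h) k i) π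
      else π with hF
    have hFocc : ∀ (π : Fin n → ℕ)
        (h : ∃ x, OccursAt π (fun t : Fin k => σ t.castSucc) x),
        F π = g (Nat.find h) (wwordT n π (Nat.find h) k i) π := by
      intro π h
      simp only [hF]
      rw [dif_pos h]
    have hFno : ∀ (π : Fin n → ℕ),
        ¬ (∃ x, OccursAt π (fun t : Fin k => σ t.castSucc) x) → F π = π := by
      intro π h
      simp only [hF]
      rw [dif_neg h]
    have hFmaps : Set.MapsTo F (VSet n σ v) (VSet n τ v) := by
      intro π hπ
      obtain ⟨hP, hC, hpre⟩ := hπ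
      by_cases h : ∃ x, OccursAt π (fun t : Fin k => σ t.castSucc) x
      · have hmem := hmemX σ π (Nat.find h) hP hC (Nat.find_spec h)
          (fun x' hx' => Nat.find_min h hx')
        have himg := (hg (Nat.find h) (wwordT n π (Nat.find h) k i)).mapsTo hmem
        rw [hFocc π h]
        have himg2 := himg
        obtain ⟨-, -, hO2, -, -⟩ := himg2
        obtain ⟨hxk, -⟩ := hO2
        refine ⟨himg.1, himg.2.1, ?_⟩
        intro p hp
        have hplt := p.isLt
        have hpx : (p : ℕ) < Nat.find h + k - 1 := by omega
        have e1 := hletter τ (Nat.find h) _ _ himg p hpx hp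
        have e2 := hletter σ (Nat.find h) _ π hmem p hpx hp
        exact e1.trans (e2.symm.trans (hpre p hp))
      · rw [hFno π h]
        push_neg at h
        exact ⟨hP, hnocc τ π (fun x hx => h x ((hoc π x).2 hx)), hpre⟩
    have hFinj : Set.InjOn F (VSet n σ v) := by
      intro π hπ π' hπ' heq
      by_cases h : ∃ x, OccursAt π (fun t : Fin k => σ t.castSucc) x
      · by_cases h' : ∃ x, OccursAt π' (fun t : Fin k => σ t.castSucc) x
        · have hmem := hmemX σ π (Nat.find h) hπ.1 hπ.2.1 (Nat.find_spec h)
            (fun x' hx' => Nat.find_min h hx')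
          have hmem' := hmemX σ π' (Nat.find h') hπ'.1 hπ'.2.1 (Nat.find_spec h')
            (fun x' hx' => Nat.find_min h' hx')
          have himg := (hg (Nat.find h) (wwordT n π (Nat.find h) k i)).mapsTo hmem
          have himg' := (hg (Nat.find h') (wwordT n π' (Nat.find h') k i)).mapsTo hmem'
          rw [hFocc π h, hFocc π' h'] at heq
          rw [← heq] at himg'
          have hxeq : Nat.find h = Nat.find h' := by
            by_contra hne
            rcases Nat.lt_or_ge (Nat.find h) (Nat.find h') with hlt | hge
            · exact himg'.2.2.2.1 (Nat.find h) hlt himg.2.2.1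
            · exact himg.2.2.2.1 (Nat.find h') (by omega) himg'.2.2.1
          rw [← hxeq] at himg' hmem' heq
          have hweq : wwordT n π (Nat.find h) k i = wwordT n π' (Nat.find h) k i := by
            funext q
            by_cases hq : q < Nat.find h + k - 1
            · obtain ⟨-, -, hO, -, hwc1⟩ := himg
              obtain ⟨-, -, -, -, hwc2⟩ := himg'
              obtain ⟨hxk, -⟩ := hO
              have hn1 : q < n := by omega
              have hn2 : q + 1 < n := by omega
              have e1 := hwc1 ⟨q, hq⟩ hn1 hn2
              have e2 := hwc2 ⟨q, hq⟩ hn1 hn2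
              exact e1.trans e2.symm
            · simp only [wwordT]
              rw [if_neg hq, if_neg hq]
          rw [hweq] at hmem heq
          exact (hg (Nat.find h) (wwordT n π' (Nat.find h) k i)).injOn hmem hmem' heq
        · exfalso
          have hmem := hmemX σ π (Nat.find h) hπ.1 hπ.2.1 (Nat.find_spec h)
            (fun x' hx' => Nat.find_min h hx')
          have himg := (hg (Nat.find h) (wwordT n π (Nat.find h) k i)).mapsTo hmem
          have hOg := himg.2.2.1
          rw [← hFocc π h, heq, hFno π' h'] at hOg
          exact h' ⟨Nat.find h, (hoc π' _).2 hOg⟩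
      · by_cases h' : ∃ x, OccursAt π' (fun t : Fin k => σ t.castSucc) x
        · exfalso
          have hmem' := hmemX σ π' (Nat.find h') hπ'.1 hπ'.2.1 (Nat.find_spec h')
            (fun x' hx' => Nat.find_min h' hx')
          have himg' := (hg (Nat.find h') (wwordT n π' (Nat.find h') k i)).mapsTo hmem'
          have hOg := himg'.2.2.1
          rw [← hFocc π' h', ← heq, hFno π h] at hOg
          exact h ⟨Nat.find h', (hoc π _).2 hOg⟩
        · rw [hFno π h, hFno π' h'] at heq
          exact heq
    have hFsurj : Set.SurjOn F (VSet n σ v) (VSet n τ v) := by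
      intro π' hπ'
      obtain ⟨hP', hC', hpre'⟩ := hπ'
      by_cases h : ∃ x, OccursAt π' (fun t : Fin k => σ t.castSucc) x
      · have hmem' : π' ∈ XSet n τ (Nat.find h) i
            (fun p => wwordT n π' (Nat.find h) k i ↑p) :=
          hmemX τ π' (Nat.find h) hP' hC' ((hoc π' _).1 (Nat.find_spec h))
            (fun x' hx' hcon => Nat.find_min h hx' ((hoc π' x').2 hcon))
        obtain ⟨π, hmem, hgπ⟩ :=
          (hg (Nat.find h) (wwordT n π' (Nat.find h) k i)).surjOn hmem'
        have hxk : Nat.find h + k ≤ n := by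
          obtain ⟨hxk, -⟩ := hmem'.2.2.1
          exact hxk
        have hπV : π ∈ VSet n σ v := by
          refine ⟨hmem.1, hmem.2.1, ?_⟩
          intro p hp
          have hplt := p.isLt
          have hpx : (p : ℕ) < Nat.find h + k - 1 := by omega
          have e1 := hletter σ (Nat.find h) _ π hmem p hpx hp
          have e2 := hletter τ (Nat.find h) _ π' hmem' p hpx hp
          exact e1.trans (e2.symm.trans (hpre' p hp))
        have hσex : ∃ x, OccursAt π (fun t : Fin k => σ t.castSucc) x :=
          ⟨Nat.find h, hmem.2.2.1⟩
        have hfeq : Nat.find hσex = Nat.find h :=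
          le_antisymm (Nat.find_le hmem.2.2.1)
            (le_of_not_gt fun hlt => hmem.2.2.2.1 _ hlt (Nat.find_spec hσex))
        have hww : wwordT n π (Nat.find h) k i = wwordT n π' (Nat.find h) k i := by
          funext q
          by_cases hq : q < Nat.find h + k - 1
          · have hn1 : q < n := by omega
            have hn2 : q + 1 < n := by omega
            have e1 := hwval π (Nat.find h) q hq hn1 hn2
            have e2 := hmem.2.2.2.2 ⟨q, hq⟩ hn1 hn2
            exact e1.trans e2.symm
          · simp only [wwordT]
            rw [if_neg hq, if_neg hq]
        refine ⟨π, hπV, ?_⟩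
        rw [hFocc π hσex, hfeq, hww]
        exact hgπ
      · refine ⟨π', ⟨hP', hnocc σ π' (fun x hx => h ⟨x, hx⟩), hpre'⟩, ?_⟩
        exact hFno π' h
    have hbij : Set.BijOn F (VSet n σ v) (VSet n τ v) := ⟨hFmaps, hFinj, hFsurj⟩
    calc (VSet n σ v).ncard = (F '' (VSet n σ v)).ncard :=
          (Set.ncard_image_of_injOn hFinj).symm
      _ = (VSet n τ v).ncard := by rw [hbij.image_eq]
  constructor
  · intro r hr v _
    rw [Tnv_eq_VSet, Tnv_eq_VSet]
    exact main r hr v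
  · have h0 := main 0 hi1 (fun p => p.elim0)
    have e : ∀ ρ : Fin (k + 1) → ℕ, VSet n ρ (fun p : Fin 0 => p.elim0) =
        {π : Fin n → ℕ | π ∈ PermWords n ∧ ¬ Contains π ρ (Set.Icc 1 (k - 1))} := by
      intro ρ
      ext π
      constructor
      · rintro ⟨a, b, -⟩; exact ⟨a, b⟩
      · rintro ⟨a, b⟩; exact ⟨a, b, fun p => p.elim0⟩
    rw [← e σ, ← e τ]
    exact h0
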